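/- In ℚ⟨⟨x,y⟩⟩, let σ be the automorphism with σ(x) = x, σ(y) = (1−x)⁻¹y, let τ be the continuous anti-automorphism exchanging x and y, and let α be the endomorphism with α(x) = x − xy, α(y) = −xy. Then for positive integers k₁,...,k_d, τστ(α(x^{k₁−1}y ⋯ x^{k_d−1}y)) = (−1)^d x^{k₁}(1−y)⁻¹y ⋯ x^{k_d}(1−y)⁻¹y. -/
import Mathlib


/-- In `ℚ⟨⟨x,y⟩⟩` (modelled by any `ℚ`-algebra containing `x, y` with `1 - x` and
`1 - y` invertible, with inverses `u` and `v`), let `σ` be the algebra map with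
`σ(x) = x`, `σ(y) = (1-x)⁻¹y`, let `τ` be the anti-automorphism exchanging `x` and
`y`, and let `α` be the algebra map with `α(x) = x - xy`, `α(y) = -xy`. Then for
positive integers `k₁, …, k_d`:
`τστ(α(x^{k₁-1}y ⋯ x^{k_d-1}y)) = (-1)^d x^{k₁}(1-y)⁻¹y ⋯ x^{k_d}(1-y)⁻¹y`. -/
theorem stmt_12 (R : Type*) [Ring R] [Algebra ℚ R] (x y u v : R)
    (hu1 : u * (1 - x) = 1) (hu2 : (1 - x) * u = 1)
    (hv1 : v * (1 - y) = 1) (hv2 : (1 - y) * v = 1)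
    (σ α : R →ₐ[ℚ] R) (hσx : σ x = x) (hσy : σ y = u * y)
    (hαx : α x = x - x * y) (hαy : α y = -(x * y))
    (τ : R → R) (hτ_add : ∀ a b, τ (a + b) = τ a + τ b)
    (hτ_mul : ∀ a b, τ (a * b) = τ b * τ a) (hτ_one : τ 1 = 1)
    (hτ_smul : ∀ (q : ℚ) (a : R), τ (q • a) = q • τ a)
    (hτx : τ x = y) (hτy : τ y = x) (hτu : τ u = v)
    (d : ℕ) (hd : 1 ≤ d) (k : Fin d → ℕ) (hk : ∀ i, 1 ≤ k i) :
    τ (σ (τ (α (List.ofFn fun i => x ^ (k i - 1) * y).prod))) =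
      (-1 : R) ^ d * (List.ofFn fun i => x ^ (k i) * (v * y)).prod := by
  have hτ_neg : ∀ a : R, τ (-a) = -τ a := by
    intro a
    have h := hτ_smul (-1) a
    simpa [neg_smul, one_smul] using h
  have hτ_sub : ∀ a b : R, τ (a - b) = τ a - τ b := by
    intro a b
    rw [sub_eq_add_neg, hτ_add, hτ_neg, sub_eq_add_neg]
  have hτ_pow : ∀ (a : R) (n : ℕ), τ (a ^ n) = τ a ^ n := by
    intro a n
    induction n with
    | zero => simp [hτ_one]
    | succ n ih => rw [pow_succ, hτ_mul, ih, pow_succ']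
  set G : R → R := fun a => τ (σ (τ (α a))) with hG
  have hG_one : G 1 = 1 := by simp [hG, hτ_one]
  have hG_mul : ∀ a b : R, G (a * b) = G a * G b := by
    intro a b
    simp only [hG, map_mul, hτ_mul]
  have hG_prod : ∀ l : List R, G l.prod = (l.map G).prod := by
    intro l
    induction l with
    | nil => simpa using hG_one
    | cons a t ih => simp [List.prod_cons, hG_mul, ih]
  have key : ∀ n : ℕ, 1 ≤ n → G (x ^ (n - 1) * y) = -(x ^ n * (v * y)) := by
    intro n hn
    have hα : α (x ^ (n - 1) * y) = (x - x * y) ^ (n - 1) * -(x * y) := by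
      rw [map_mul, map_pow, hαx, hαy]
    have hτxy : τ (x * y) = x * y := by rw [hτ_mul, hτx, hτy]
    have hτ1 : τ ((x - x * y) ^ (n - 1) * -(x * y)) =
        -(x * y) * (y - x * y) ^ (n - 1) := by
      rw [hτ_mul, hτ_neg, hτxy, hτ_pow, hτ_sub, hτx, hτxy]
    have hσyxy : σ (y - x * y) = y := by
      rw [map_sub, map_mul, hσx, hσy]
      have h1 : u * y - x * (u * y) = (1 - x) * u * y := by noncomm_ring
      rw [h1, hu2, one_mul]
    have hσ1 : σ (-(x * y) * (y - x * y) ^ (n - 1)) =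
        -(x * (u * y)) * y ^ (n - 1) := by
      rw [map_mul, map_pow, hσyxy, map_neg, map_mul, hσx, hσy]
    have hτ2 : τ (-(x * (u * y)) * y ^ (n - 1)) = -(x ^ n * (v * y)) := by
      rw [hτ_mul, hτ_pow, hτy, hτ_neg, hτ_mul, hτ_mul, hτx, hτy, hτu]
      have hx : x ^ (n - 1) * x = x ^ n := by
        rw [← pow_succ, Nat.sub_add_cancel hn]
      calc x ^ (n - 1) * -(x * v * y) = -(x ^ (n - 1) * x * (v * y)) := by
            rw [mul_neg]; ring_nf; rw [mul_assoc, mul_assoc]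
        _ = -(x ^ n * (v * y)) := by rw [hx]
    simp only [hG, hα, hτ1, hσ1, hτ2]
  have hneg : ∀ l : List R, (l.map Neg.neg).prod = (-1 : R) ^ l.length * l.prod := by
    intro l
    induction l with
    | nil => simp
    | cons a t ih =>
      have hc := ((Commute.neg_one_left a).pow_left t.length).eq
      rw [List.map_cons, List.prod_cons, List.prod_cons, ih, List.length_cons,
        pow_succ', mul_assoc, neg_mul, ← mul_assoc a, ← hc, mul_assoc, neg_one_mul]
  calc τ (σ (τ (α (List.ofFn fun i => x ^ (k i - 1) * y).prod)))
      = G (List.ofFn fun i => x ^ (k i - 1) * y).prod := rfl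
    _ = ((List.ofFn fun i => x ^ (k i - 1) * y).map G).prod := hG_prod _
    _ = (List.ofFn fun i => G (x ^ (k i - 1) * y)).prod := by rw [List.map_ofFn]; rfl
    _ = (List.ofFn fun i => -(x ^ (k i) * (v * y))).prod := by
        exact congrArg (fun l => List.prod l)
          (congrArg List.ofFn (funext fun i => key (k i) (hk i)))
    _ = ((List.ofFn fun i => x ^ (k i) * (v * y)).map Neg.neg).prod := by
        rw [List.map_ofFn]; rfl
    _ = (-1 : R) ^ d * (List.ofFn fun i => x ^ (k i) * (v * y)).prod := by
        rw [hneg, List.length_ofFn]
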